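/- Suppose a smooth family of Jordan curves Γ_t parametrized by z(θ, t) satisfies the Polubarinova–Galin equation Im(conj(∂z/∂t)·∂z/∂θ) = 1, and simultaneously Γ_t = {|P(z,t)| = 1} where P ∘ z = e^{inθ}. Then on Γ_t: Re((∂P/∂t)·conj(P)) = −(1/n)·|∂P/∂z|², equivalently d/dt(|P|²) = −(2/n)·|∂P/∂z|² on Γ_t. -/

import Mathlib

open Complex

/-- Combining the Polubarinova–Galin equation `Im(z̄ₜ·z_θ) = 1` with the lemniscate
constraint `P(z(θ,t),t) = e^{inθ}`, `|P| = 1` on `Γ_t`, yields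
`Re(Pₜ·conj P) = −(1/n)·|P_z|²`, i.e. `d/dt |P|² = −(2/n)|P_z|²` on `Γ_t`. -/
theorem polubarinova_galin_lemniscate_identity
    (n : ℕ) (hn : 1 ≤ n) (a : ℕ → ℝ → ℂ) (ha : ∀ j, Differentiable ℝ (a j))
    (z : ℝ → ℝ → ℂ)
    (hzt : ∀ θ, Differentiable ℝ (z θ))
    (hzθ : ∀ t, Differentiable ℝ (fun θ => z θ t))
    (P : ℂ → ℝ → ℂ)
    (hP : ∀ w t, P w t = ∑ j ∈ Finset.range (n + 1), a j t * w ^ j)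
    (hconst : ∀ θ t : ℝ, P (z θ t) t = Complex.exp (Complex.I * n * θ))
    (habs : ∀ θ t : ℝ, ‖P (z θ t) t‖ = 1)
    (hPG : ∀ θ t : ℝ,
      ((starRingEnd ℂ) (deriv (fun s => z θ s) t) * deriv (fun θ' => z θ' t) θ).im = 1)
    (θ t : ℝ) :
    (deriv (fun s => P (z θ t) s) t * (starRingEnd ℂ) (P (z θ t) t)).re =
      -(1 / n) * ‖deriv (fun w => P w t) (z θ t)‖ ^ 2 := by
  have hzT : HasDerivAt (fun s => z θ s) (deriv (fun s => z θ s) t) t :=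
    ((hzt θ) t).hasDerivAt
  have hzΘ : HasDerivAt (fun θ' => z θ' t) (deriv (fun θ' => z θ' t) θ) θ :=
    ((hzθ t) θ).hasDerivAt
  -- notation
  let w : ℂ := z θ t
  let zt : ℂ := deriv (fun s => z θ s) t
  let zθ : ℂ := deriv (fun θ' => z θ' t) θ
  let E : ℂ := Complex.exp (Complex.I * n * θ)
  -- the z-derivative of P at w
  have hPzD : HasDerivAt (fun v : ℂ => P v t)
      (∑ j ∈ Finset.range (n + 1), a j t * ((j : ℂ) * w ^ (j - 1))) w := by
    have hfun : (fun v : ℂ => P v t)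
        = fun v => ∑ j ∈ Finset.range (n + 1), a j t * v ^ j :=
      funext fun v => hP v t
    rw [hfun]
    exact HasDerivAt.fun_sum fun j _ => (hasDerivAt_pow j w).const_mul (a j t)
  have hPz : deriv (fun w => P w t) (z θ t)
      = ∑ j ∈ Finset.range (n + 1), a j t * ((j : ℂ) * w ^ (j - 1)) := hPzD.deriv
  -- the time derivative of P at the fixed point w
  have hPtD : HasDerivAt (fun s => P w s)
      (∑ j ∈ Finset.range (n + 1), deriv (a j) t * w ^ j) t := by
    have hfun : (fun s : ℝ => P w s)
        = fun s => ∑ j ∈ Finset.range (n + 1), a j s * w ^ j :=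
      funext fun s => hP w s
    rw [hfun]
    exact HasDerivAt.fun_sum fun j _ => ((ha j) t).hasDerivAt.mul_const (w ^ j)
  have hPt : deriv (fun s => P (z θ t) s) t
      = ∑ j ∈ Finset.range (n + 1), deriv (a j) t * w ^ j := hPtD.deriv
  -- powers of z along each variable
  have hpowT : ∀ j : ℕ, HasDerivAt (fun s => z θ s ^ j)
      ((j : ℂ) * w ^ (j - 1) * zt) t := by
    intro j
    have := (hasDerivAt_pow j (z θ t)).scomp t hzT
    simpa [smul_eq_mul, Function.comp_def, mul_comm, mul_assoc, mul_left_comm] using this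
  have hpowΘ : ∀ j : ℕ, HasDerivAt (fun θ' => z θ' t ^ j)
      ((j : ℂ) * w ^ (j - 1) * zθ) θ := by
    intro j
    have := (hasDerivAt_pow j (z θ t)).scomp θ hzΘ
    simpa [smul_eq_mul, Function.comp_def, mul_comm, mul_assoc, mul_left_comm] using this
  -- full time derivative of s ↦ P (z θ s) s, which is constant
  have hFull : HasDerivAt (fun s => P (z θ s) s)
      (∑ j ∈ Finset.range (n + 1),
        (deriv (a j) t * w ^ j + a j t * ((j : ℂ) * w ^ (j - 1) * zt))) t := by
    have hfun : (fun s : ℝ => P (z θ s) s)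
        = fun s => ∑ j ∈ Finset.range (n + 1), a j s * z θ s ^ j :=
      funext fun s => hP (z θ s) s
    rw [hfun]
    exact HasDerivAt.fun_sum fun j _ => ((ha j) t).hasDerivAt.mul (hpowT j)
  have hFullZero : (∑ j ∈ Finset.range (n + 1),
      (deriv (a j) t * w ^ j + a j t * ((j : ℂ) * w ^ (j - 1) * zt))) = 0 := by
    have hconstfun : (fun s : ℝ => P (z θ s) s) = fun _ => E :=
      funext fun s => hconst θ s
    rw [hconstfun] at hFull
    exact (hFull.unique (hasDerivAt_const t E))
  -- θ derivative of θ' ↦ P (z θ' t) t, which equals exp (I n θ')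
  have hGΘ : HasDerivAt (fun θ' => P (z θ' t) t)
      (∑ j ∈ Finset.range (n + 1), a j t * ((j : ℂ) * w ^ (j - 1) * zθ)) θ := by
    have hfun : (fun θ' : ℝ => P (z θ' t) t)
        = fun θ' => ∑ j ∈ Finset.range (n + 1), a j t * z θ' t ^ j :=
      funext fun θ' => hP (z θ' t) t
    rw [hfun]
    exact HasDerivAt.fun_sum fun j _ => (hpowΘ j).const_mul (a j t)
  have hEΘ : HasDerivAt (fun θ' : ℝ => Complex.exp (Complex.I * n * θ'))
      (E * (Complex.I * n)) θ := by
    have h1 : HasDerivAt (fun θ' : ℝ => (θ' : ℂ)) 1 θ := by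
      exact Complex.ofRealCLM.hasDerivAt
    have h2 := (h1.const_mul (Complex.I * n)).cexp
    simpa [E, mul_comm, mul_assoc, mul_left_comm] using h2
  have hB : (∑ j ∈ Finset.range (n + 1), a j t * ((j : ℂ) * w ^ (j - 1) * zθ))
      = E * (Complex.I * n) := by
    have hconstfun : (fun θ' : ℝ => P (z θ' t) t)
        = fun θ' : ℝ => Complex.exp (Complex.I * n * θ') :=
      funext fun θ' => hconst θ' t
    rw [hconstfun] at hGΘ
    exact hGΘ.unique hEΘ
  -- rewrite sums
  have hsplit : ∀ u : ℂ, (∑ j ∈ Finset.range (n + 1), a j t * ((j : ℂ) * w ^ (j - 1) * u))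
      = (∑ j ∈ Finset.range (n + 1), a j t * ((j : ℂ) * w ^ (j - 1))) * u := by
    intro u
    rw [Finset.sum_mul]
    exact Finset.sum_congr rfl fun j _ => by ring
  -- key relations
  have hPteq : deriv (fun s => P (z θ t) s) t
      = -(deriv (fun w => P w t) (z θ t) * zt) := by
    rw [hPt, hPz]
    have := hFullZero
    rw [Finset.sum_add_distrib, hsplit zt] at this
    linear_combination this
  have hBeq : deriv (fun w => P w t) (z θ t) * zθ = E * (Complex.I * n) := by
    rw [hPz, ← hsplit zθ, hB]
  set Pz : ℂ := deriv (fun w => P w t) (z θ t) with hPzdef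
  set Pt : ℂ := deriv (fun s => P (z θ t) s) t with hPtdef
  have hD : ((starRingEnd ℂ) zt * zθ).im = 1 := hPG θ t
  -- conj zt * zθ
  set c : ℂ := (starRingEnd ℂ) zt * zθ with hc
  have h1 : Pz * c = (starRingEnd ℂ) zt * (E * (Complex.I * n)) := by
    rw [hc, ← hBeq]; ring
  have h2 : (starRingEnd ℂ) Pz * (starRingEnd ℂ) c
      = zt * ((starRingEnd ℂ) E * (-Complex.I * n)) := by
    have := congrArg (starRingEnd ℂ) h1
    simpa [map_mul, Complex.conj_conj, Complex.conj_I, mul_comm, mul_assoc,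
      mul_left_comm] using this
  have h3 : (Complex.normSq Pz : ℂ) * (starRingEnd ℂ) c
      = Pt * (starRingEnd ℂ) E * (Complex.I * n) := by
    have := congrArg (fun x => Pz * x) h2
    rw [← mul_assoc, Complex.mul_conj] at this
    rw [this, hPteq]
    ring
  -- multiply by -I to isolate Pt * conj E * n
  have hkey : Pt * (starRingEnd ℂ) E * (n : ℂ)
      = -Complex.I * ((Complex.normSq Pz : ℂ) * (starRingEnd ℂ) c) := by
    linear_combination Complex.I * h3 + (Pt * (starRingEnd ℂ) E * (n : ℂ)) * Complex.I_sq
  -- take real parts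
  have hre : (Pt * (starRingEnd ℂ) E).re * n = -Complex.normSq Pz := by
    have := congrArg Complex.re hkey
    have hL : (Pt * (starRingEnd ℂ) E * (n : ℂ)).re
        = (Pt * (starRingEnd ℂ) E).re * n := by
      simp [Complex.mul_re]
    have hR : (-Complex.I * ((Complex.normSq Pz : ℂ) * (starRingEnd ℂ) c)).re
        = -(Complex.normSq Pz * c.im) := by
      simp [Complex.mul_re, Complex.mul_im]
    rw [hL, hR] at this
    rw [this, hD, mul_one]
  -- conclude
  have hn' : (n : ℝ) ≠ 0 := by
    exact Nat.cast_ne_zero.mpr (by omega)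
  have hgoalE : (starRingEnd ℂ) (P (z θ t) t) = (starRingEnd ℂ) E := by
    rw [hconst θ t]
  rw [hgoalE, Complex.sq_norm]
  simp only [Complex.mul_re, Complex.conj_re, Complex.conj_im, mul_neg, sub_neg_eq_add] at hre ⊢
  field_simp
  linarith [hre]
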